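/- For all natural numbers n ≥ 1 and k ≥ 1 with gcd(k, n) = 1, the real numbers 2·cos(2πk/n) and 2·cos(2π/n) have the same minimal polynomial over ℚ: minpoly ℚ (2·cos(2πk/n)) = minpoly ℚ (2·cos(2π/n)). In other words, the numbers ζ_n^k + ζ_n^{−k} for k coprime to n are exactly the roots of Ψ_n. -/

import Mathlib

open Real

instance minpoly_two_cos_neZero (n : ℕ+) : NeZero (((n : ℕ) : ℚ)) := ⟨by simp⟩

instance minpoly_two_cos_cyc (n : ℕ+) :
    IsCyclotomicExtension {(n : ℕ)} ℚ (CyclotomicField n ℚ) :=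
  CyclotomicField.isCyclotomicExtension n ℚ

open Polynomial in
lemma minpoly_two_cos_aux (n : ℕ+) (w : ℂ) (hw : IsPrimitiveRoot w n) (θ : ℝ)
    (hθ : ((2 * Real.cos θ : ℝ) : ℂ) = w + w⁻¹) :
    minpoly ℚ (2 * Real.cos θ) =
      minpoly ℚ (IsCyclotomicExtension.zeta n ℚ (CyclotomicField n ℚ)
        + (IsCyclotomicExtension.zeta n ℚ (CyclotomicField n ℚ))⁻¹) := by
  set K := CyclotomicField n ℚ
  set μ := IsCyclotomicExtension.zeta n ℚ K with hμdef
  have hμ : IsPrimitiveRoot μ n := IsCyclotomicExtension.zeta_spec n ℚ K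
  have hirr : Irreducible (cyclotomic (n : ℕ) ℚ) := cyclotomic.irreducible_rat n.pos
  -- embedding of K into ℂ sending μ to w
  obtain ⟨φ, hφ⟩ : ∃ φ : K →ₐ[ℚ] ℂ, φ μ = w := by
    refine ⟨(hμ.embeddingsEquivPrimitiveRoots ℂ hirr).symm
      ⟨w, (mem_primitiveRoots n.pos).2 hw⟩, ?_⟩
    have := hμ.embeddingsEquivPrimitiveRoots_apply_coe ℂ hirr
      ((hμ.embeddingsEquivPrimitiveRoots ℂ hirr).symm ⟨w, (mem_primitiveRoots n.pos).2 hw⟩)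
    rw [Equiv.apply_symm_apply] at this
    exact this.symm
  have hinj : Function.Injective (algebraMap ℝ ℂ) := (algebraMap ℝ ℂ).injective
  have h1 : minpoly ℚ (2 * Real.cos θ) = minpoly ℚ ((algebraMap ℝ ℂ) (2 * Real.cos θ)) :=
    (minpoly.algebraMap_eq hinj _).symm
  have h2 : (algebraMap ℝ ℂ) (2 * Real.cos θ) = φ (μ + μ⁻¹) := by
    rw [map_add, map_inv₀, hφ]
    exact hθ
  rw [h1, h2, minpoly.algHom_eq φ φ.injective]

theorem minpoly_two_cos_coprime (n k : ℕ) (hn : 1 ≤ n) (hk : 1 ≤ k)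
    (hcop : Nat.gcd k n = 1) :
    minpoly ℚ (2 * Real.cos (2 * π * k / n)) = minpoly ℚ (2 * Real.cos (2 * π / n)) := by
  have hn0 : n ≠ 0 := by omega
  have hn0' : (n : ℂ) ≠ 0 := Nat.cast_ne_zero.2 hn0
  set N : ℕ+ := ⟨n, hn⟩ with hN
  have hNn : ((N : ℕ) : ℂ) = (n : ℂ) := rfl
  -- w = exp(2πI * (k/n)) is a primitive n-th root of unity
  have hw : IsPrimitiveRoot (Complex.exp (2 * π * Complex.I * (k / n))) (N : ℕ) :=
    Complex.isPrimitiveRoot_exp_of_coprime k n hn0 hcop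
  have hz : IsPrimitiveRoot (Complex.exp (2 * π * Complex.I / n)) (N : ℕ) :=
    Complex.isPrimitiveRoot_exp n hn0
  have key : ∀ θ : ℝ, ((2 * Real.cos θ : ℝ) : ℂ) =
      Complex.exp ((θ : ℂ) * Complex.I) + (Complex.exp ((θ : ℂ) * Complex.I))⁻¹ := by
    intro θ
    rw [← Complex.exp_neg]
    push_cast [Complex.ofReal_cos]
    rw [Complex.two_cos]
    ring_nf
  have e1 : (((2 * π * k / n : ℝ)) : ℂ) * Complex.I = 2 * π * Complex.I * (k / n) := by
    push_cast; ring
  have e2 : (((2 * π / n : ℝ)) : ℂ) * Complex.I = 2 * π * Complex.I / n := by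
    push_cast; ring
  rw [minpoly_two_cos_aux N _ hw (2 * π * k / n) (by rw [key, e1]),
      minpoly_two_cos_aux N _ hz (2 * π / n) (by rw [key, e2])]
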